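/- Let n ≥ 1 and Q ≥ 2. Let A = (a₁,…,a_{Q−1}) and B = (b₁,…,b_{Q−1}) be (Q−1)-tuples of points of ℝⁿ, let p, q ∈ ℝⁿ, and let A_p, B_q ∈ (ℝⁿ)^Q be the Q-tuples obtained from A and B by appending p and q respectively. Then 𝒢(A, B)² ≤ 2‖p − q‖² + 5·𝒢(A_p, B_q)². -/

import Mathlib

/-- The metric `𝒢` on unordered `Q`-tuples of points of `ℝⁿ`: the minimum over permutations
`σ` of `(Σᵢ ‖Pᵢ − R_{σ(i)}‖²)^{1/2}`. -/
noncomputable def Gdist {n Q : ℕ} (P R : Fin Q → EuclideanSpace ℝ (Fin n)) : ℝ :=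
  ⨅ σ : Equiv.Perm (Fin Q), Real.sqrt (∑ i, ‖P i - R (σ i)‖ ^ 2)

lemma gdist_nonneg' {n Q : ℕ} (P R : Fin Q → EuclideanSpace ℝ (Fin n)) : 0 ≤ Gdist P R :=
  Real.iInf_nonneg fun _ => Real.sqrt_nonneg _

lemma gdist_sq_le' {n Q : ℕ} (P R : Fin Q → EuclideanSpace ℝ (Fin n)) (σ : Equiv.Perm (Fin Q)) :
    Gdist P R ^ 2 ≤ ∑ i, ‖P i - R (σ i)‖ ^ 2 := by
  have h1 : Gdist P R ≤ Real.sqrt (∑ i, ‖P i - R (σ i)‖ ^ 2) :=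
    ciInf_le ⟨0, by rintro x ⟨τ, rfl⟩; exact Real.sqrt_nonneg _⟩ σ
  calc Gdist P R ^ 2 ≤ Real.sqrt (∑ i, ‖P i - R (σ i)‖ ^ 2) ^ 2 :=
        pow_le_pow_left₀ (gdist_nonneg' P R) h1 2
    _ = _ := Real.sq_sqrt (Finset.sum_nonneg fun i _ => sq_nonneg _)

lemma gdist_exists' {n Q : ℕ} (P R : Fin Q → EuclideanSpace ℝ (Fin n)) :
    ∃ σ : Equiv.Perm (Fin Q), Gdist P R ^ 2 = ∑ i, ‖P i - R (σ i)‖ ^ 2 := by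
  obtain ⟨σ, hσ⟩ := exists_eq_ciInf_of_finite
    (f := fun σ : Equiv.Perm (Fin Q) => Real.sqrt (∑ i, ‖P i - R (σ i)‖ ^ 2))
  exact ⟨σ, by
    rw [Gdist, ← hσ, Real.sq_sqrt (Finset.sum_nonneg fun i _ => sq_nonneg _)]⟩

lemma gdist_snoc_aux {n m : ℕ} (A B : Fin m → EuclideanSpace ℝ (Fin n))
    (p q : EuclideanSpace ℝ (Fin n)) :
    Gdist A B ^ 2 ≤ 2 * ‖p - q‖ ^ 2 + 5 * Gdist (Fin.snoc A p) (Fin.snoc B q) ^ 2 := by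
  classical
  set P : Fin (m + 1) → EuclideanSpace ℝ (Fin n) := Fin.snoc A p with hP
  set R : Fin (m + 1) → EuclideanSpace ℝ (Fin n) := Fin.snoc B q with hR
  obtain ⟨σ, hσ⟩ := gdist_exists' P R
  rw [hσ]
  set L : Fin (m + 1) := Fin.last m with hLdef
  have hPL : P L = p := by simp [hP, hLdef]
  have hRL : R L = q := by simp [hR, hLdef]
  set σ' : Equiv.Perm (Fin (m + 1)) := Equiv.swap L (σ L) * σ with hσ'def
  have hσ'L : σ' L = L := by
    simp [hσ'def, Equiv.swap_apply_right]
  have hne : ∀ i : Fin m, σ' i.castSucc ≠ L := by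
    intro i h
    have := σ'.injective (h.trans hσ'L.symm)
    exact (Fin.castSucc_lt_last i).ne this
  -- build the restricted permutation τ on Fin m
  set e : Equiv.Perm (Option (Fin m)) := finSuccEquivLast.permCongr σ' with hedef
  set τ : Equiv.Perm (Fin m) := Equiv.removeNone e with hτdef
  have hτ : ∀ i : Fin m, (τ i).castSucc = σ' i.castSucc := by
    intro i
    have hes : e (some i) = some ((σ' i.castSucc).castPred (hne i)) := by
      have h1 : e (some i) = finSuccEquivLast (σ' (finSuccEquivLast.symm (some i))) := rfl
      rw [h1, finSuccEquivLast_symm_some]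
      conv_lhs => rw [← Fin.castSucc_castPred (σ' i.castSucc) (hne i)]
      rw [finSuccEquivLast_castSucc]
    have h2 := Equiv.removeNone_some e ⟨_, hes⟩
    rw [hes] at h2
    have h3 : τ i = (σ' i.castSucc).castPred (hne i) := Option.some_injective _ h2
    rw [h3, Fin.castSucc_castPred]
  -- the key sum bound
  have hsum : ∑ i : Fin m, ‖A i - B (τ i)‖ ^ 2 + ‖p - q‖ ^ 2
      = ∑ j : Fin (m + 1), ‖P j - R (σ' j)‖ ^ 2 := by
    have h3 : ∑ j : Fin (m + 1), ‖P j - R (σ' j)‖ ^ 2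
        = ∑ i : Fin m, ‖P i.castSucc - R (σ' i.castSucc)‖ ^ 2 + ‖P L - R (σ' L)‖ ^ 2 :=
      Fin.sum_univ_castSucc _
    rw [h3, hσ'L, hPL, hRL]
    congr 1
    refine Finset.sum_congr rfl fun i _ => ?_
    rw [← hτ i]
    simp [hP, hR]
  have hkey := gdist_sq_le' A B τ
  have hCnonneg : ∀ (s : Finset (Fin (m+1))) (g : Fin (m+1) → EuclideanSpace ℝ (Fin n))
      (g' : Fin (m+1) → EuclideanSpace ℝ (Fin n)), (0:ℝ) ≤ ∑ j ∈ s, ‖g j - g' j‖ ^ 2 :=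
    fun s g g' => Finset.sum_nonneg fun j _ => sq_nonneg _
  by_cases hL : σ L = L
  · -- σ already fixes L, so σ' = σ
    have hσ'eq : σ' = σ := by
      rw [hσ'def, hL]
      simp
      rfl
    have hS : (0:ℝ) ≤ ∑ i, ‖P i - R (σ i)‖ ^ 2 := Finset.sum_nonneg fun i _ => sq_nonneg _
    rw [hσ'eq] at hsum
    nlinarith [sq_nonneg ‖p - q‖, hkey, hsum]
  · -- σ L ≠ L; let k = σ⁻¹ L
    set k : Fin (m + 1) := σ.symm L with hkdef
    have hσk : σ k = L := σ.apply_symm_apply L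
    have hkL : k ≠ L := fun h => hL (h ▸ hσk)
    -- split both sums over univ = ((univ.erase k).erase L) ∪ {L, k}
    set s : Finset (Fin (m + 1)) := (Finset.univ.erase k).erase L with hsdef
    have hLmem : L ∈ Finset.univ.erase k := Finset.mem_erase.2 ⟨Ne.symm hkL, Finset.mem_univ _⟩
    have hsplit : ∀ f : Fin (m + 1) → ℝ,
        ∑ j, f j = ∑ j ∈ s, f j + f L + f k := by
      intro f
      rw [hsdef]
      rw [← Finset.sum_erase_add Finset.univ f (Finset.mem_univ k),
        ← Finset.sum_erase_add _ f hLmem]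
    have hagree : ∀ j ∈ s, ‖P j - R (σ' j)‖ ^ 2 = ‖P j - R (σ j)‖ ^ 2 := by
      intro j hj
      rw [hsdef, Finset.mem_erase, Finset.mem_erase] at hj
      have hjL : j ≠ L := hj.1
      have hjk : j ≠ k := hj.2.1
      have h1 : σ j ≠ L := fun h => hjk (by rw [hkdef, ← h, Equiv.symm_apply_apply])
      have h2 : σ j ≠ σ L := fun h => hjL (σ.injective h)
      rw [hσ'def]
      simp only [Equiv.Perm.mul_apply]
      rw [Equiv.swap_apply_of_ne_of_ne h1 h2]
    have hσ'k : σ' k = σ L := by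
      rw [hσ'def]
      simp only [Equiv.Perm.mul_apply]
      rw [hσk, Equiv.swap_apply_left]
    have hf := hsplit fun j => ‖P j - R (σ' j)‖ ^ 2
    have hg := hsplit fun j => ‖P j - R (σ j)‖ ^ 2
    rw [Finset.sum_congr rfl hagree] at hf
    rw [hσ'L, hσ'k, hPL, hRL] at hf
    rw [hσk, hRL, hPL] at hg
    -- triangle inequality
    have htri : ‖P k - R (σ L)‖ ≤ ‖P k - q‖ + ‖p - q‖ + ‖p - R (σ L)‖ := by
      have h1 : P k - R (σ L) = (P k - q) + (q - p) + (p - R (σ L)) := by abel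
      rw [h1]
      calc ‖(P k - q) + (q - p) + (p - R (σ L))‖
          ≤ ‖(P k - q) + (q - p)‖ + ‖p - R (σ L)‖ := norm_add_le _ _
        _ ≤ ‖P k - q‖ + ‖q - p‖ + ‖p - R (σ L)‖ := by
            have := norm_add_le (P k - q) (q - p)
            linarith
        _ = ‖P k - q‖ + ‖p - q‖ + ‖p - R (σ L)‖ := by rw [norm_sub_rev q p]
    have hC : (0:ℝ) ≤ ∑ j ∈ s, ‖P j - R (σ j)‖ ^ 2 :=
      Finset.sum_nonneg fun j _ => sq_nonneg _
    have hd : (0:ℝ) ≤ ‖P k - R (σ L)‖ := norm_nonneg _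
    have ha : (0:ℝ) ≤ ‖P k - q‖ := norm_nonneg _
    have hb : (0:ℝ) ≤ ‖p - q‖ := norm_nonneg _
    have hc : (0:ℝ) ≤ ‖p - R (σ L)‖ := norm_nonneg _
    nlinarith [hkey, hsum, hf, hg, sq_nonneg (‖P k - q‖ - ‖p - R (σ L)‖),
      sq_nonneg (‖p - q‖ - ‖P k - q‖ - ‖p - R (σ L)‖),
      sq_nonneg ‖P k - q‖, sq_nonneg ‖p - R (σ L)‖,
      mul_le_mul htri htri hd (by linarith : (0:ℝ) ≤ ‖P k - q‖ + ‖p - q‖ + ‖p - R (σ L)‖)]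

/-- If `A_p`, `B_q` are the `Q`-tuples obtained from the `(Q−1)`-tuples `A`, `B` by appending
points `p`, `q` respectively, then `𝒢(A,B)² ≤ 2‖p−q‖² + 5 𝒢(A_p,B_q)²`. -/
theorem statement5 {n Q : ℕ} (hn : 1 ≤ n) (hQ : 2 ≤ Q)
    (A B : Fin (Q - 1) → EuclideanSpace ℝ (Fin n)) (p q : EuclideanSpace ℝ (Fin n)) :
    Gdist A B ^ 2 ≤ 2 * ‖p - q‖ ^ 2 + 5 * Gdist (Fin.snoc A p) (Fin.snoc B q) ^ 2 :=
  gdist_snoc_aux A B p q
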